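/- arXiv:1804.01430 — 2 statements merged into one kernel-verified Lean document; each statement's English description precedes it below -/
import Mathlib

section
/- Fix x̄ ∈ (0, 1/2) and define l(p̂) = (1 − 2p̂) / [ (p̂ * x̄)(1 − p̂ * x̄) · log((1 − p̂ * x̄)/(p̂ * x̄)) ] for p̂ ∈ [0, 1/2). Then l is convex on [0, 1/2). -/
/-- The star operation `p * x = p(1−x) + (1−p)x`. -/
noncomputable def pstar (p x : ℝ) : ℝ := p * (1 - x) + (1 - p) * x

/-- `l(p̂) = (1 − 2p̂) / [ (p̂ * x̄)(1 − p̂ * x̄) · log₂((1 − p̂ * x̄)/(p̂ * x̄)) ]`. -/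
noncomputable def lfun (xb ph : ℝ) : ℝ :=
  (1 - 2 * ph) /
    (pstar ph xb * (1 - pstar ph xb) * Real.logb 2 ((1 - pstar ph xb) / pstar ph xb))

open Real Set

-- key inequality 1: sinh x ≤ x cosh x for x ≥ 0
lemma ineq1 {x : ℝ} (hx : 0 ≤ x) : Real.sinh x ≤ x * Real.cosh x := by
  have h : MonotoneOn (fun x : ℝ => x * Real.cosh x - Real.sinh x) (Ici 0) := by
    apply monotoneOn_of_hasDerivWithinAt_nonneg (convex_Ici 0)
      (f' := fun x : ℝ => x * Real.sinh x)
    · fun_prop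
    · intro y hy
      have : HasDerivAt (fun x : ℝ => x * Real.cosh x - Real.sinh x) (y * Real.sinh y) y := by
        have h1 : HasDerivAt (fun x : ℝ => x * Real.cosh x)
            (1 * Real.cosh y + y * Real.sinh y) y :=
          (hasDerivAt_id y).mul (Real.hasDerivAt_cosh y)
        have := h1.sub (Real.hasDerivAt_sinh y)
        exact this.congr_deriv (by ring)
      exact this.hasDerivWithinAt
    · intro y hy
      rw [interior_Ici] at hy
      exact mul_nonneg (le_of_lt hy) (Real.sinh_nonneg_iff.2 (le_of_lt hy))
  have := h (self_mem_Ici) (mem_Ici.2 hx) hx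
  simpa using this

-- key inequality 2: x cosh x ≤ (1 + x²/2) sinh x for x ≥ 0
lemma ineq2 {x : ℝ} (hx : 0 ≤ x) : x * Real.cosh x ≤ (1 + x ^ 2 / 2) * Real.sinh x := by
  have h : MonotoneOn (fun x : ℝ => (1 + x ^ 2 / 2) * Real.sinh x - x * Real.cosh x) (Ici 0) := by
    apply monotoneOn_of_hasDerivWithinAt_nonneg (convex_Ici 0)
      (f' := fun x : ℝ => x ^ 2 / 2 * Real.cosh x)
    · fun_prop
    · intro y hy
      have h1 : HasDerivAt (fun x : ℝ => (1 + x ^ 2 / 2) * Real.sinh x)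
          ((2 * y ^ 1 / 2) * Real.sinh y + (1 + y ^ 2 / 2) * Real.cosh y) y := by
        exact (((hasDerivAt_pow 2 y).div_const 2).const_add 1).mul (Real.hasDerivAt_sinh y)
      have h2 : HasDerivAt (fun x : ℝ => x * Real.cosh x)
          (1 * Real.cosh y + y * Real.sinh y) y :=
        (hasDerivAt_id y).mul (Real.hasDerivAt_cosh y)
      have := h1.sub h2
      exact (this.congr_deriv (by ring)).hasDerivWithinAt
    · intro y hy
      rw [interior_Ici] at hy
      positivity
  have := h (self_mem_Ici) (mem_Ici.2 hx) hx
  simpa using this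

noncomputable def psi (v : ℝ) : ℝ := Real.sinh (2 * v) / (2 * v)

noncomputable def psi' (v : ℝ) : ℝ := Real.cosh (2 * v) / v - Real.sinh (2 * v) / (2 * v ^ 2)

lemma hasDerivAt_psi {v : ℝ} (hv : 0 < v) : HasDerivAt psi (psi' v) v := by
  have h2v : (2 : ℝ) * v ≠ 0 := by positivity
  have hd : HasDerivAt (fun v : ℝ => (2 : ℝ) * v) 2 v := by
    simpa using (hasDerivAt_id v).const_mul (2:ℝ)
  have hs : HasDerivAt (fun v : ℝ => Real.sinh (2 * v)) (Real.cosh (2 * v) * 2) v := by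
    exact (Real.hasDerivAt_sinh (2 * v)).comp v hd
  have := hs.div hd h2v
  refine this.congr_deriv ?_
  unfold psi'
  field_simp

lemma hasDerivAt_psi' {v : ℝ} (hv : 0 < v) :
    HasDerivAt psi'
      (2 * Real.sinh (2 * v) / v - 2 * Real.cosh (2 * v) / v ^ 2 + Real.sinh (2 * v) / v ^ 3)
      v := by
  have hv0 : v ≠ 0 := ne_of_gt hv
  have hd : HasDerivAt (fun v : ℝ => (2 : ℝ) * v) 2 v := by
    simpa using (hasDerivAt_id v).const_mul (2:ℝ)
  have hc : HasDerivAt (fun v : ℝ => Real.cosh (2 * v)) (Real.sinh (2 * v) * 2) v := by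
    exact (Real.hasDerivAt_cosh (2 * v)).comp v hd
  have hs : HasDerivAt (fun v : ℝ => Real.sinh (2 * v)) (Real.cosh (2 * v) * 2) v := by
    exact (Real.hasDerivAt_sinh (2 * v)).comp v hd
  have h1 : HasDerivAt (fun v : ℝ => Real.cosh (2 * v) / v)
      ((Real.sinh (2 * v) * 2 * v - Real.cosh (2 * v) * 1) / v ^ 2) v :=
    hc.div (hasDerivAt_id v) hv0
  have h2 : HasDerivAt (fun v : ℝ => Real.sinh (2 * v) / (2 * v ^ 2))
      ((Real.cosh (2 * v) * 2 * (2 * v ^ 2) - Real.sinh (2 * v) * (2 * (2 * v ^ 1))) /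
        (2 * v ^ 2) ^ 2) v := by
    have hd : HasDerivAt (fun v : ℝ => 2 * v ^ 2) (2 * (2 * v ^ 1)) v :=
      (hasDerivAt_pow 2 v).const_mul 2
    exact hs.div hd (by positivity)
  have := h1.sub h2
  refine this.congr_deriv ?_
  field_simp
  ring

lemma psi'_nonneg {v : ℝ} (hv : 0 < v) : 0 ≤ psi' v := by
  have h := ineq1 (x := 2 * v) (by positivity)
  unfold psi'
  rw [sub_nonneg, div_le_div_iff₀ (by positivity) hv]
  nlinarith [Real.cosh_pos (x := 2 * v)]

lemma psi''_nonneg {v : ℝ} (hv : 0 < v) :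
    0 ≤ 2 * Real.sinh (2 * v) / v - 2 * Real.cosh (2 * v) / v ^ 2 + Real.sinh (2 * v) / v ^ 3 := by
  have h := ineq2 (x := 2 * v) (by positivity)
  have hv3 : (0:ℝ) < v ^ 3 := by positivity
  have e : 2 * Real.sinh (2 * v) / v - 2 * Real.cosh (2 * v) / v ^ 2 + Real.sinh (2 * v) / v ^ 3
      = (2 * v ^ 2 * Real.sinh (2 * v) - 2 * v * Real.cosh (2 * v) + Real.sinh (2 * v)) / v ^ 3 := by
    field_simp
  rw [e]
  apply div_nonneg _ (le_of_lt hv3)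
  nlinarith [h]

lemma psi_convexOn : ConvexOn ℝ (Ioi (0:ℝ)) psi := by
  have hint : interior (Ioi (0:ℝ)) = Ioi 0 := interior_Ioi
  apply convexOn_of_hasDerivWithinAt2_nonneg (convex_Ioi 0) (f' := psi')
    (f'' := fun v => 2 * Real.sinh (2 * v) / v - 2 * Real.cosh (2 * v) / v ^ 2 +
      Real.sinh (2 * v) / v ^ 3)
  · intro p hp
    exact ((hasDerivAt_psi hp).continuousAt.continuousWithinAt)
  · intro v hv
    rw [hint] at hv ⊢
    exact (hasDerivAt_psi hv).hasDerivWithinAt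
  · intro v hv
    rw [hint] at hv ⊢
    exact (hasDerivAt_psi' hv).hasDerivWithinAt
  · intro v hv
    rw [hint] at hv
    exact psi''_nonneg hv

lemma psi_monotoneOn : MonotoneOn psi (Ioi (0:ℝ)) := by
  apply monotoneOn_of_hasDerivWithinAt_nonneg (convex_Ioi 0) (f' := psi')
  · intro p hp
    exact (hasDerivAt_psi hp).continuousAt.continuousWithinAt
  · intro v hv
    rw [interior_Ioi] at hv ⊢
    exact (hasDerivAt_psi hv).hasDerivWithinAt
  · intro v hv
    rw [interior_Ioi] at hv
    exact psi'_nonneg hv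

-- composition lemma
lemma convexOn_comp' {s t : Set ℝ} {f g : ℝ → ℝ} (hf : ConvexOn ℝ s f) (hg : ConvexOn ℝ t g)
    (hg' : MonotoneOn g t) (hmaps : Set.MapsTo f s t) : ConvexOn ℝ s (g ∘ f) := by
  refine ⟨hf.1, fun x hx y hy a b ha hb hab => ?_⟩
  have hxy := hf.1 hx hy ha hb hab
  exact (hg' (hmaps hxy) (hg.1 (hmaps hx) (hmaps hy) ha hb hab)
    (hf.2 hx hy ha hb hab)).trans (hg.2 (hmaps hx) (hmaps hy) ha hb hab)

/-- For fixed `x̄ ∈ (0, 1/2)`, the function `l` is convex on `[0, 1/2)`. -/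
theorem stmt4 (xb : ℝ) (hx : xb ∈ Set.Ioo (0 : ℝ) (1 / 2)) :
    ConvexOn ℝ (Set.Ico (0 : ℝ) (1 / 2)) (lfun xb) := by
  obtain ⟨hx0, hx2⟩ := hx
  set c : ℝ := 1 - 2 * xb with hc_def
  have hc0 : 0 < c := by simp [hc_def]; linarith
  clear_value c
  -- u p
  set u : ℝ → ℝ := fun p => (Real.log (1 - (xb + c * p)) - Real.log (xb + c * p)) / 2 with hu_def
  clear_value u
  have hq : ∀ p ∈ Set.Ico (0:ℝ) (1/2), 0 < xb + c * p ∧ xb + c * p < 1/2 := by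
    rintro p ⟨hp0, hp2⟩
    constructor
    · nlinarith
    · nlinarith
  -- u is convex
  have hu' : ∀ p : ℝ, 0 < xb + c * p → xb + c * p < 1/2 →
      HasDerivAt u ((-c) / (1 - (xb + c * p)) / 2 - c / (xb + c * p) / 2) p := by
    intro p h1 h2
    have haff : HasDerivAt (fun p : ℝ => xb + c * p) c p := by
      simpa using ((hasDerivAt_id p).const_mul c).const_add xb
    have haff2 : HasDerivAt (fun p : ℝ => 1 - (xb + c * p)) (-c) p := by
      simpa using haff.const_sub 1
    have hl1 : HasDerivAt (fun p : ℝ => Real.log (1 - (xb + c * p)))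
        ((-c) / (1 - (xb + c * p))) p := haff2.log (ne_of_gt (by linarith : (0:ℝ) < 1 - (xb + c * p)))
    have hl2 : HasDerivAt (fun p : ℝ => Real.log (xb + c * p)) (c / (xb + c * p)) p :=
      haff.log (ne_of_gt h1)
    have := (hl1.sub hl2).div_const 2
    rw [hu_def]
    exact this.congr_deriv (by ring)
  have hu_conv : ConvexOn ℝ (Set.Ico (0:ℝ) (1/2)) u := by
    apply convexOn_of_hasDerivWithinAt2_nonneg (convex_Ico 0 (1/2))
      (f' := fun p => (-c) / (1 - (xb + c * p)) / 2 - c / (xb + c * p) / 2)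
      (f'' := fun p => ((0 * (1 - (xb + c * p)) - (-c) * (-c)) / (1 - (xb + c * p)) ^ 2) / 2
        - ((0 * (xb + c * p) - c * c) / (xb + c * p) ^ 2) / 2)
    · intro p hp
      obtain ⟨h1, h2⟩ := hq p hp
      exact (hu' p h1 h2).continuousAt.continuousWithinAt
    · intro p hp
      rw [interior_Ico] at hp
      obtain ⟨h1, h2⟩ := hq p (Set.mem_Ico.2 ⟨le_of_lt hp.1, hp.2⟩)
      exact (hu' p h1 h2).hasDerivWithinAt
    · intro p hp
      rw [interior_Ico] at hp
      obtain ⟨h1, h2⟩ := hq p (Set.mem_Ico.2 ⟨le_of_lt hp.1, hp.2⟩)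
      have haff : HasDerivAt (fun p : ℝ => xb + c * p) c p := by
        simpa using ((hasDerivAt_id p).const_mul c).const_add xb
      have haff2 : HasDerivAt (fun p : ℝ => 1 - (xb + c * p)) (-c) p := by
        simpa using haff.const_sub 1
      have hd1 : HasDerivAt (fun p : ℝ => (-c) / (1 - (xb + c * p)) / 2)
          (((0 * (1 - (xb + c * p)) - (-c) * (-c)) / (1 - (xb + c * p)) ^ 2) / 2) p :=
        ((hasDerivAt_const p (-c)).div haff2
          (ne_of_gt (by linarith : (0:ℝ) < 1 - (xb + c * p)))).div_const 2
      have hd2 : HasDerivAt (fun p : ℝ => c / (xb + c * p) / 2)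
          (((0 * (xb + c * p) - c * c) / (xb + c * p) ^ 2) / 2) p :=
        ((hasDerivAt_const p c).div haff (ne_of_gt h1)).div_const 2
      exact (hd1.sub hd2).hasDerivWithinAt
    · intro p hp
      rw [interior_Ico] at hp
      obtain ⟨h1, h2⟩ := hq p (Set.mem_Ico.2 ⟨le_of_lt hp.1, hp.2⟩)
      have e1 : (0:ℝ) < (1 - (xb + c * p)) ^ 2 := by nlinarith
      have e2 : (0:ℝ) < (xb + c * p) ^ 2 := by positivity
      have e : ((0 * (1 - (xb + c * p)) - (-c) * (-c)) / (1 - (xb + c * p)) ^ 2) / 2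
          - ((0 * (xb + c * p) - c * c) / (xb + c * p) ^ 2) / 2
          = (c ^ 2 / (xb + c * p) ^ 2 - c ^ 2 / (1 - (xb + c * p)) ^ 2) / 2 := by
        ring
      rw [e]
      have hA2 : (xb + c * p) ^ 2 ≤ (1 - (xb + c * p)) ^ 2 := by nlinarith
      have h3 : c ^ 2 / (1 - (xb + c * p)) ^ 2 ≤ c ^ 2 / (xb + c * p) ^ 2 := by
        gcongr
      linarith
  -- u maps into Ioi 0
  have hu_pos : ∀ p ∈ Set.Ico (0:ℝ) (1/2), 0 < u p := by
    intro p hp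
    obtain ⟨h1, h2⟩ := hq p hp
    have : Real.log (xb + c * p) < Real.log (1 - (xb + c * p)) :=
      Real.log_lt_log h1 (by linarith)
    simp only [hu_def]
    linarith
  -- composition convex
  have hcomp : ConvexOn ℝ (Set.Ico (0:ℝ) (1/2)) (psi ∘ u) :=
    convexOn_comp' hu_conv psi_convexOn psi_monotoneOn (fun p hp => hu_pos p hp)
  -- constant
  have hconst : (0:ℝ) ≤ 2 * Real.log 2 / c := by
    have := Real.log_pos (by norm_num : (1:ℝ) < 2)
    positivity
  have hsmul := hcomp.smul hconst
  refine hsmul.congr ?_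
  intro p hp
  obtain ⟨h1, h2⟩ := hq p hp
  have hup := hu_pos p hp
  set q : ℝ := xb + c * p with hq_def
  clear_value q
  have hq1 : q < 1 := by linarith
  have hq0 : q ≠ 0 := ne_of_gt h1
  have h1q : (1:ℝ) - q ≠ 0 := by linarith
  have hpst : pstar p xb = q := by simp only [pstar, hq_def, hc_def]; ring
  have hlog2 : Real.log 2 ≠ 0 := ne_of_gt (Real.log_pos (by norm_num))
  have hexp : Real.exp (2 * u p) = (1 - q) / q := by
    simp only [hu_def, ← hq_def]
    rw [show 2 * ((Real.log (1 - q) - Real.log q) / 2) = Real.log (1 - q) - Real.log q by ring,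
      Real.exp_sub, Real.exp_log (by linarith), Real.exp_log h1]
  have hexpneg : Real.exp (-(2 * u p)) = q / (1 - q) := by
    rw [Real.exp_neg, hexp, inv_div]
  have hsinh : Real.sinh (2 * u p) = (1 - 2 * q) / (2 * q * (1 - q)) := by
    rw [Real.sinh_eq, hexp, hexpneg]
    field_simp
    ring
  have hlogb : Real.logb 2 ((1 - q) / q) = 2 * u p / Real.log 2 := by
    rw [Real.logb, Real.log_div (by linarith) (ne_of_gt h1)]
    simp only [hu_def, ← hq_def]
    ring
  simp only [Function.comp_apply, smul_eq_mul, lfun, hpst, hlogb, psi, hsinh]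
  have h2u : (2 : ℝ) * u p ≠ 0 := by positivity
  have hcp : 1 - 2 * q = c * (1 - 2 * p) := by
    rw [hq_def, hc_def]; ring
  rw [hcp]
  field_simp
end

section
/- Fix x̄ ∈ (0, 1/2) and define l(p̂) = (1 − 2p̂) / [ (p̂ * x̄)(1 − p̂ * x̄) · log((1 − p̂ * x̄)/(p̂ * x̄)) ] for p̂ ∈ [0, 1/2). Then l is nonincreasing on [0, 1/2): for all 0 ≤ p̂₁ ≤ p̂₂ < 1/2, l(p̂₂) ≤ l(p̂₁). -/
lemma lemA : ∀ x ∈ Set.Ioo (0:ℝ) 1, Real.log x ≤ 2*(x-1)/(x+1) := by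
  have hanti : AntitoneOn (fun x : ℝ => 2*(x-1)/(x+1) - Real.log x) (Set.Ioi 0) := by
    apply antitoneOn_of_deriv_nonpos (convex_Ioi 0)
    · apply ContinuousOn.sub
      · exact ((continuousOn_const.mul (continuousOn_id.sub continuousOn_const)).div
          (continuousOn_id.add continuousOn_const)
          (fun x hx => by simp only [Set.mem_Ioi] at hx; positivity))
      · exact Real.continuousOn_log.mono (fun x hx => by simp only [Set.mem_Ioi, Set.mem_compl_iff, Set.mem_singleton_iff] at *; linarith)
    · intro x hx
      rw [interior_Ioi] at hx
      simp only [Set.mem_Ioi] at hx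
      have h1 : HasDerivAt (fun x : ℝ => 2*(x-1)/(x+1) - Real.log x)
          ((2*1*(x+1) - 2*(x-1)*1)/(x+1)^2 - x⁻¹) x := by
        exact ((((hasDerivAt_id x).sub_const 1).const_mul 2).div
          ((hasDerivAt_id x).add_const 1) (by positivity)).sub (Real.hasDerivAt_log hx.ne')
      exact h1.differentiableAt.differentiableWithinAt
    · intro x hx
      rw [interior_Ioi] at hx
      simp only [Set.mem_Ioi] at hx
      have h1 : HasDerivAt (fun x : ℝ => 2*(x-1)/(x+1) - Real.log x)
          ((2*1*(x+1) - 2*(x-1)*1)/(x+1)^2 - x⁻¹) x := by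
        exact ((((hasDerivAt_id x).sub_const 1).const_mul 2).div
          ((hasDerivAt_id x).add_const 1) (by positivity)).sub (Real.hasDerivAt_log hx.ne')
      rw [h1.deriv]
      rw [sub_nonpos, ← one_div]
      rw [div_le_div_iff₀ (by positivity) hx]
      nlinarith [sq_nonneg (x-1)]
  intro x hx
  obtain ⟨hx0, hx1⟩ := hx
  have := hanti (Set.mem_Ioi.mpr hx0) (Set.mem_Ioi.mpr one_pos) hx1.le
  simp at this
  linarith

lemma lemB : ∀ q ∈ Set.Ioo (0:ℝ) (1/2),
    (1 - 2*q) ≤ (1 - 2*q + 2*q^2) * Real.log ((1-q)/q) := by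
  intro q ⟨hq0, hq2⟩
  have h1q : (0:ℝ) < 1 - q := by linarith
  have hv : (q/(1-q))^2 ∈ Set.Ioo (0:ℝ) 1 := by
    constructor
    · positivity
    · have : q/(1-q) < 1 := by rw [div_lt_one h1q]; linarith
      nlinarith [div_pos hq0 h1q]
  have hA := lemA _ hv
  have hlog : Real.log ((q/(1-q))^2) = -2 * Real.log ((1-q)/q) := by
    rw [Real.log_pow]
    rw [show q/(1-q) = ((1-q)/q)⁻¹ by rw [inv_div]]
    rw [Real.log_inv]
    ring
  have hD : (0:ℝ) < 1 - 2*q + 2*q^2 := by nlinarith [sq_nonneg (2*q-1)]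
  have hrhs : 2*((q/(1-q))^2 - 1)/((q/(1-q))^2 + 1) = -2*(1-2*q)/(1-2*q+2*q^2) := by
    rw [div_eq_div_iff]
    · field_simp
      ring
    · have : (0:ℝ) < (q/(1-q))^2 := by positivity
      linarith
    · linarith
  rw [hlog, hrhs] at hA
  rw [le_div_iff₀ hD] at hA
  nlinarith

noncomputable def Gfun (q : ℝ) : ℝ := (1 - 2*q)/(q*(1-q)*Real.log ((1-q)/q))

lemma lemC : AntitoneOn Gfun (Set.Ioo (0:ℝ) (1/2)) := by
  have key : ∀ q ∈ Set.Ioo (0:ℝ) (1/2), ∃ d : ℝ, d ≤ 0 ∧ HasDerivAt Gfun d q := by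
    intro q ⟨hq0, hq2⟩
    have h1q : (0:ℝ) < 1 - q := by linarith
    have hfrac : 1 < (1-q)/q := by rw [lt_div_iff₀ hq0]; linarith
    have hL : 0 < Real.log ((1-q)/q) := Real.log_pos hfrac
    set L := Real.log ((1-q)/q) with hLdef
    have hden_pos : 0 < q*(1-q)*L := by positivity
    -- derivative of inner fraction
    have hf : HasDerivAt (fun x : ℝ => (1-x)/x) ((-1*q - (1-q)*1)/q^2) q := by
      have := (((hasDerivAt_id q).const_sub 1).div (hasDerivAt_id q) hq0.ne')
      exact this
    have hlog : HasDerivAt (fun x : ℝ => Real.log ((1-x)/x))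
        (((-1*q - (1-q)*1)/q^2) / ((1-q)/q)) q := hf.log (by positivity)
    have hmul : HasDerivAt (fun x : ℝ => x*(1-x)) (1*(1-q) + q*(-1)) q := by
      have := (hasDerivAt_id q).mul ((hasDerivAt_id q).const_sub 1)
      exact this
    have hden : HasDerivAt (fun x : ℝ => x*(1-x)*Real.log ((1-x)/x))
        ((1*(1-q) + q*(-1))*L + (q*(1-q))*(((-1*q - (1-q)*1)/q^2) / ((1-q)/q))) q :=
      hmul.mul hlog
    have hnum : HasDerivAt (fun x : ℝ => 1 - 2*x) (-2) q := by
      have := ((hasDerivAt_id q).const_mul 2).const_sub 1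
      exact this.congr_deriv (by ring)
    have hG : HasDerivAt Gfun
        ((-2 * (q*(1-q)*L) - (1-2*q) *
          ((1*(1-q) + q*(-1))*L + (q*(1-q))*(((-1*q - (1-q)*1)/q^2) / ((1-q)/q)))) /
          (q*(1-q)*L)^2) q := hnum.div hden hden_pos.ne'
    refine ⟨_, ?_, hG⟩
    apply div_nonpos_of_nonpos_of_nonneg _ (by positivity)
    have hsimp : (q*(1-q))*(((-1*q - (1-q)*1)/q^2) / ((1-q)/q)) = -1 := by
      field_simp
      ring
    rw [hsimp]
    have hB := lemB q ⟨hq0, hq2⟩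
    rw [← hLdef] at hB
    nlinarith
  apply antitoneOn_of_deriv_nonpos (convex_Ioo _ _)
  · exact fun q hq => ((key q hq).choose_spec.2).differentiableAt.continuousAt.continuousWithinAt
  · intro q hq
    rw [isOpen_Ioo.interior_eq] at hq
    exact ((key q hq).choose_spec.2).differentiableAt.differentiableWithinAt
  · intro q hq
    rw [isOpen_Ioo.interior_eq] at hq
    obtain ⟨d, hd, hder⟩ := key q hq
    rw [hder.deriv]
    exact hd

lemma pstar_mem (xb ph : ℝ) (hx : xb ∈ Set.Ioo (0:ℝ) (1/2)) (hph : 0 ≤ ph)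
    (hph2 : ph < 1/2) : pstar ph xb ∈ Set.Ioo (0:ℝ) (1/2) := by
  obtain ⟨hx0, hx2⟩ := hx
  unfold pstar
  constructor
  · nlinarith
  · nlinarith

lemma lfun_eq (xb ph : ℝ) (hx : xb ∈ Set.Ioo (0:ℝ) (1/2)) (hph : 0 ≤ ph)
    (hph2 : ph < 1/2) :
    lfun xb ph = (Real.log 2/(1-2*xb)) * Gfun (pstar ph xb) := by
  obtain ⟨hx0, hx2⟩ := hx
  obtain ⟨hq0, hq2⟩ := pstar_mem xb ph ⟨hx0, hx2⟩ hph hph2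
  have h1q : (0:ℝ) < 1 - pstar ph xb := by linarith
  have hfrac : 1 < (1 - pstar ph xb)/pstar ph xb := by rw [lt_div_iff₀ hq0]; linarith
  have hL : 0 < Real.log ((1 - pstar ph xb)/pstar ph xb) := Real.log_pos hfrac
  have hlog2 : (0:ℝ) < Real.log 2 := Real.log_pos one_lt_two
  have hq : pstar ph xb = ph * (1 - xb) + (1 - ph) * xb := rfl
  have h2x : (1:ℝ)-2*xb ≠ 0 := by linarith
  unfold lfun Gfun Real.logb
  field_simp
  rw [hq]
  ring

/-- For fixed `x̄ ∈ (0, 1/2)`, the function `l` is nonincreasing on `[0, 1/2)`: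
for all `0 ≤ p̂₁ ≤ p̂₂ < 1/2`, `l(p̂₂) ≤ l(p̂₁)`. -/
theorem stmt5 (xb : ℝ) (hx : xb ∈ Set.Ioo (0 : ℝ) (1 / 2)) :
    ∀ p1 p2 : ℝ, 0 ≤ p1 → p1 ≤ p2 → p2 < 1 / 2 → lfun xb p2 ≤ lfun xb p1 := by
  intro p1 p2 hp1 h12 hp2
  have hp1' : p1 < 1/2 := lt_of_le_of_lt h12 hp2
  have hq1 := pstar_mem xb p1 hx hp1 hp1'
  have hq2 := pstar_mem xb p2 hx (le_trans hp1 h12) hp2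
  obtain ⟨hx0, hx2⟩ := hx
  have hqle : pstar p1 xb ≤ pstar p2 xb := by
    unfold pstar; nlinarith
  have hmono := lemC hq1 hq2 hqle
  rw [lfun_eq xb p1 ⟨hx0, hx2⟩ hp1 hp1', lfun_eq xb p2 ⟨hx0, hx2⟩ (le_trans hp1 h12) hp2]
  have hc : 0 ≤ Real.log 2/(1-2*xb) :=
    div_nonneg (Real.log_pos one_lt_two).le (by linarith)
  exact mul_le_mul_of_nonneg_left hmono hc
end
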